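/- Let H be a complex Hilbert space with dim H ≥ 2, let (Tₙ) be a sequence of nonzero bounded linear operators on H with ε̂(Tₙ) → 0, and let λₙ ∈ [m(Tₙ), ‖Tₙ‖] for each n. Then dist(Tₙ/λₙ, 𝒱) → 0, where 𝒱 is the set of linear isometries on H. -/

import Mathlib

open scoped ComplexInnerProductSpace

noncomputable section

set_option synthInstance.maxHeartbeats 1000000
set_option maxHeartbeats 1000000
set_option linter.unusedSectionVars false
set_option linter.unusedVariables false
set_option linter.unusedTactic false
set_option linter.deprecated false

variable {H : Type*} [NormedAddCommGroup H] [InnerProductSpace ℂ H] [CompleteSpace H]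

/-- `T` is `ε`-approximately orthogonality preserving: orthogonal vectors are mapped to
`ε`-orthogonal vectors. -/
def IsAOP (T : H →L[ℂ] H) (ε : ℝ) : Prop :=
  ∀ x y : H, ⟪x, y⟫ = 0 → ‖⟪T x, T y⟫‖ ≤ ε * (‖T x‖ * ‖T y‖)

/-- `ε̂(T)`, the smallest `ε ∈ [0,1]` for which `T` is `ε`-AOP. -/
def epsHat (T : H →L[ℂ] H) : ℝ :=
  sInf {ε : ℝ | 0 ≤ ε ∧ ε ≤ 1 ∧ IsAOP T ε}

/-- The minimum modulus `m(T) = inf {‖T x‖ : ‖x‖ = 1}`. -/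
def minMod (T : H →L[ℂ] H) : ℝ :=
  sInf {r : ℝ | ∃ x : H, ‖x‖ = 1 ∧ ‖T x‖ = r}

/-- The set `ℂ𝒱` of scalar multiples of linear isometries of `H`. -/
def scalarIsoms (H : Type*) [NormedAddCommGroup H] [InnerProductSpace ℂ H] :
    Set (H →L[ℂ] H) :=
  {S | ∃ (c : ℂ) (V : H →L[ℂ] H), (∀ x : H, ‖V x‖ = ‖x‖) ∧ S = c • V}

/-- `dist(T, ℂ𝒱)`. -/
def distCV (T : H →L[ℂ] H) : ℝ := Metric.infDist T (scalarIsoms H)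

/-- The set `𝒱` of linear isometries of `H`. -/
def isoms (H : Type*) [NormedAddCommGroup H] [InnerProductSpace ℂ H] :
    Set (H →L[ℂ] H) :=
  {V | ∀ x : H, ‖V x‖ = ‖x‖}

/-- `dist(T, 𝒱)`. -/
def distV (T : H →L[ℂ] H) : ℝ := Metric.infDist T (isoms H)

lemma exists_unit_vec (hdim : 2 ≤ Module.rank ℂ H) : ∃ x : H, ‖x‖ = 1 := by
  have : Nontrivial H := by
    rw [← rank_pos_iff_nontrivial (R := ℂ)]; exact lt_of_lt_of_le (by norm_num) hdim
  obtain ⟨v, hv⟩ := exists_ne (0 : H)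
  refine ⟨(‖v‖⁻¹ : ℂ) • v, ?_⟩
  rw [norm_smul]
  simp [norm_inv, inv_mul_cancel₀, norm_ne_zero_iff.mpr hv]

lemma exists_unit_orthogonal (hdim : 2 ≤ Module.rank ℂ H) (x : H) :
    ∃ z : H, ‖z‖ = 1 ∧ ⟪x, z⟫ = 0 := by
  by_cases hx : x = 0
  · obtain ⟨z, hz⟩ := exists_unit_vec hdim
    exact ⟨z, hz, by simp [hx]⟩
  · have hxn : ‖x‖ ≠ 0 := norm_ne_zero_iff.mpr hx
    obtain ⟨y, hy⟩ : ∃ y : H, y ∉ (ℂ ∙ x) := by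
      by_contra hcon
      push_neg at hcon
      have htop : (ℂ ∙ x) = ⊤ := Submodule.eq_top_iff'.mpr hcon
      have h1 : Module.rank ℂ ↥(ℂ ∙ x) ≤ 1 := by
        simpa using rank_span_le (R := ℂ) ({x} : Set H)
      rw [htop, rank_top] at h1
      exact absurd (hdim.trans h1) (by norm_num)
    set c : ℂ := ⟪x, y⟫ / ((‖x‖ : ℂ) ^ 2) with hc
    set w : H := y - c • x with hw
    have hxw : ⟪x, w⟫ = 0 := by
      rw [hw, inner_sub_right, inner_smul_right, inner_self_eq_norm_sq_to_K, hc]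
      have hxc : ((‖x‖ : ℂ)) ^ 2 ≠ 0 := by
        simpa using pow_ne_zero 2 (by exact_mod_cast hxn : (‖x‖ : ℂ) ≠ 0)
      field_simp
      simp [div_self hxc]
    have hw0 : w ≠ 0 := by
      intro h0
      apply hy
      have : y = c • x := by rwa [hw, sub_eq_zero] at h0
      rw [this]
      exact Submodule.smul_mem _ _ (Submodule.mem_span_singleton_self x)
    refine ⟨(‖w‖⁻¹ : ℂ) • w, ?_, ?_⟩
    · rw [norm_smul]; simp [inv_mul_cancel₀, norm_ne_zero_iff.mpr hw0]
    · rw [inner_smul_right, hxw, mul_zero]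

lemma isAOP_one (T : H →L[ℂ] H) : IsAOP T 1 := by
  intro x y _
  simpa using norm_inner_le_norm (𝕜 := ℂ) (T x) (T y)

lemma IsAOP.mono {T : H →L[ℂ] H} {η η' : ℝ} (h : IsAOP T η) (hle : η ≤ η') : IsAOP T η' := by
  intro x y hxy
  refine (h x y hxy).trans ?_
  have : (0:ℝ) ≤ ‖T x‖ * ‖T y‖ := by positivity
  nlinarith

lemma lemA {T : H →L[ℂ] H} {η : ℝ} (hT : IsAOP T η) (hη : 0 ≤ η) {x y : H}
    (hn : ‖x‖ = ‖y‖) (hxy : ⟪x, y⟫ = 0) :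
    |‖T x‖ ^ 2 - ‖T y‖ ^ 2| ≤ η * (‖T x‖ + ‖T y‖) ^ 2 := by
  have hyx : ⟪y, x⟫ = 0 := by
    rw [← inner_conj_symm, hxy, map_zero]
  have horth : ⟪x + y, x - y⟫ = 0 := by
    rw [inner_sub_right, inner_add_left, inner_add_left, hxy, hyx,
      inner_self_eq_norm_sq_to_K, inner_self_eq_norm_sq_to_K, hn]
    ring
  have key := hT _ _ horth
  have hexp : (⟪T (x + y), T (x - y)⟫ : ℂ) =
      ⟪T x, T x⟫ - ⟪T y, T y⟫ + (⟪T y, T x⟫ - ⟪T x, T y⟫) := by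
    simp only [map_add, map_sub, inner_add_left, inner_sub_left, inner_add_right,
      inner_sub_right]
    ring
  have hconj : (⟪T y, T x⟫ : ℂ).re = (⟪T x, T y⟫ : ℂ).re := by
    rw [← inner_conj_symm (T x) (T y)]
    exact Complex.conj_re _
  have hre : (⟪T (x + y), T (x - y)⟫ : ℂ).re = ‖T x‖ ^ 2 - ‖T y‖ ^ 2 := by
    rw [hexp]
    have c1 : (⟪T x, T x⟫ : ℂ).re = ‖T x‖ ^ 2 := by
      simpa using inner_self_eq_norm_sq (𝕜 := ℂ) (T x)
    have c2 : (⟪T y, T y⟫ : ℂ).re = ‖T y‖ ^ 2 := by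
      simpa using inner_self_eq_norm_sq (𝕜 := ℂ) (T y)
    simp only [Complex.add_re, Complex.sub_re, hconj, c1, c2]
    ring
  have habs : |‖T x‖ ^ 2 - ‖T y‖ ^ 2| ≤ ‖(⟪T (x + y), T (x - y)⟫ : ℂ)‖ := by
    rw [← hre]
    exact Complex.abs_re_le_norm _
  have h1 : ‖T (x + y)‖ ≤ ‖T x‖ + ‖T y‖ := by rw [map_add]; exact norm_add_le _ _
  have h2 : ‖T (x - y)‖ ≤ ‖T x‖ + ‖T y‖ := by rw [map_sub]; exact norm_sub_le _ _
  refine habs.trans (key.trans ?_)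
  have := norm_nonneg (T (x + y))
  have := norm_nonneg (T (x - y))
  nlinarith [mul_le_mul h1 h2 (norm_nonneg _) (by positivity : (0:ℝ) ≤ ‖T x‖ + ‖T y‖)]

lemma numrad {S : H →L[ℂ] H} (hS : IsSelfAdjoint S) {w : ℝ} (hw : 0 ≤ w)
    (h : ∀ x : H, ‖(⟪S x, x⟫ : ℂ)‖ ≤ w * ‖x‖ ^ 2) : ‖S‖ ≤ w := by
  refine ContinuousLinearMap.opNorm_le_bound _ hw fun x => ?_
  by_cases hSx : S x = 0
  · simp [hSx]; positivity
  have hx0 : x ≠ 0 := by rintro rfl; simp at hSx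
  set y : H := ((‖x‖ / ‖S x‖ : ℝ) : ℂ) • S x with hy
  have hyn : ‖y‖ = ‖x‖ := by
    rw [hy, norm_smul, Complex.norm_real, Real.norm_eq_abs,
      abs_of_nonneg (by positivity), div_mul_cancel₀]
    exact norm_ne_zero_iff.mpr hSx
  have hself : (⟪S x, S x⟫ : ℂ).re = ‖S x‖ ^ 2 := by
    simpa using inner_self_eq_norm_sq (𝕜 := ℂ) (S x)
  have hrey : (⟪S x, y⟫ : ℂ).re = ‖x‖ * ‖S x‖ := by
    rw [hy, inner_smul_right]
    rw [show ((‖x‖ / ‖S x‖ : ℝ) : ℂ) * ⟪S x, S x⟫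
        = (‖x‖ / ‖S x‖ : ℝ) • (⟪S x, S x⟫ : ℂ) from (Complex.real_smul).symm]
    rw [Complex.smul_re, hself]
    field_simp [norm_ne_zero_iff.mpr hSx]
    have hne : ‖S x‖ ≠ 0 := norm_ne_zero_iff.mpr hSx
    rw [smul_eq_mul, div_mul_eq_mul_div, div_eq_iff hne]
    ring
  have hsym : ∀ a b : H, (⟪S a, b⟫ : ℂ) = ⟪a, S b⟫ := fun a b => hS.isSymmetric a b
  have hid : (⟪S (x + y), x + y⟫ : ℂ).re - (⟪S (x - y), x - y⟫ : ℂ).re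
      = 4 * (⟪S x, y⟫ : ℂ).re := by
    have e1 : (⟪S (x + y), x + y⟫ : ℂ) - ⟪S (x - y), x - y⟫
        = 2 * ⟪S x, y⟫ + 2 * ⟪S y, x⟫ := by
      simp only [map_add, map_sub, inner_add_left, inner_sub_left, inner_add_right,
        inner_sub_right]
      ring
    have e2 : (⟪S y, x⟫ : ℂ).re = (⟪S x, y⟫ : ℂ).re := by
      rw [hsym y x, ← inner_conj_symm (S x) y]
      exact Complex.conj_re _
    have := congrArg Complex.re e1
    simp only [Complex.sub_re, Complex.add_re, Complex.mul_re, Complex.re_ofNat,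
      Complex.im_ofNat] at this
    rw [this, e2]
    ring
  have hb1 : (⟪S (x + y), x + y⟫ : ℂ).re ≤ w * ‖x + y‖ ^ 2 :=
    le_trans (Complex.re_le_norm _) (h _)
  have hb2 : -(w * ‖x - y‖ ^ 2) ≤ (⟪S (x - y), x - y⟫ : ℂ).re := by
    have := h (x - y)
    have h3 := Complex.abs_re_le_norm (⟪S (x - y), x - y⟫ : ℂ)
    have := abs_le.mp (h3.trans this)
    linarith [this.1]
  have hpar : ‖x + y‖ ^ 2 + ‖x - y‖ ^ 2 = 2 * ‖x‖ ^ 2 + 2 * ‖y‖ ^ 2 := by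
    have pa := @norm_add_sq ℂ _ _ _ _ x y
    have pb := @norm_sub_sq ℂ _ _ _ _ x y
    simp only [RCLike.re_to_complex] at pa pb
    linarith
  have hmain : 4 * (‖x‖ * ‖S x‖) ≤ 4 * (w * ‖x‖ ^ 2) := by
    rw [← hrey, ← hid]
    have : w * ‖x + y‖ ^ 2 + w * ‖x - y‖ ^ 2 = 4 * (w * ‖x‖ ^ 2) := by
      rw [← mul_add, hpar, hyn]; ring
    linarith
  have hxpos : 0 < ‖x‖ := norm_pos_iff.mpr hx0
  nlinarith

lemma lemB (hdim : 2 ≤ Module.rank ℂ H) {T : H →L[ℂ] H} {η : ℝ}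
    (hT : IsAOP T η) (hη : 0 ≤ η) {x y : H} (hx : ‖x‖ = 1) (hy : ‖y‖ = 1) :
    ‖T x‖ ^ 2 ≤ ‖T y‖ ^ 2 + 6 * η * ‖T‖ ^ 2 := by
  have hTx : ‖T x‖ ≤ ‖T‖ := by simpa [hx] using T.le_opNorm x
  have hTy : ‖T y‖ ≤ ‖T‖ := by simpa [hy] using T.le_opNorm y
  have hTnn : (0:ℝ) ≤ ‖T‖ := norm_nonneg T
  set α : ℂ := ⟪x, y⟫ with hα
  set w : H := y - α • x with hw
  have hxw : ⟪x, w⟫ = 0 := by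
    rw [hw, inner_sub_right, inner_smul_right, inner_self_eq_norm_sq_to_K, hx]
    push_cast
    ring
  by_cases hw0 : w = 0
  · have hyx : y = α • x := by
      have := hw ▸ hw0
      rwa [sub_eq_zero] at this
    have hαn : ‖α‖ = 1 := by
      have : ‖y‖ = ‖α‖ * ‖x‖ := by rw [hyx, norm_smul]
      rw [hy, hx, mul_one] at this
      exact this.symm
    have : ‖T y‖ = ‖T x‖ := by rw [hyx, map_smul, norm_smul, hαn, one_mul]
    rw [this]
    nlinarith
  · have hwn : ‖w‖ ≠ 0 := norm_ne_zero_iff.mpr hw0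
    set z : H := (‖w‖⁻¹ : ℂ) • w with hz
    have hzn : ‖z‖ = 1 := by
      rw [hz, norm_smul]; simp [inv_mul_cancel₀ hwn]
    have hxz : ⟪x, z⟫ = 0 := by rw [hz, inner_smul_right, hxw, mul_zero]
    have hwz : ((‖w‖ : ℂ)) • z = w := by
      rw [hz, smul_smul]
      have hcw : ((‖w‖ : ℝ) : ℂ) ≠ 0 := by exact_mod_cast hwn
      rw [show ((‖w‖ : ℂ)) * (‖w‖⁻¹ : ℂ) = 1 by push_cast; exact div_self hcw]
      rw [one_smul]
    have hy' : y = α • x + ((‖w‖ : ℂ)) • z := by rw [hwz, hw]; abel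
    -- Pythagoras for y
    have hips : (⟪α • x, w⟫ : ℂ) = 0 := by rw [inner_smul_left, hxw, mul_zero]
    have hpyth : ‖α‖ ^ 2 + ‖w‖ ^ 2 = 1 := by
      have hns := @norm_add_sq ℂ _ _ _ _ (α • x) w
      rw [hips] at hns
      simp only [map_zero] at hns
      have hyw : α • x + w = y := by rw [hw]; abel
      rw [hyw, hy, norm_smul, hx] at hns
      simpa using hns.symm
    have hαle : ‖α‖ ≤ 1 := by nlinarith [norm_nonneg α, norm_nonneg w]
    have hwle : ‖w‖ ≤ 1 := by nlinarith [norm_nonneg α, norm_nonneg w]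
    -- compare T x and T z via lemA
    have hTz : ‖T z‖ ≤ ‖T‖ := by simpa [hzn] using T.le_opNorm z
    have hcomp := lemA hT hη (by rw [hx, hzn]) hxz
    have hcomp' : ‖T x‖ ^ 2 - ‖T z‖ ^ 2 ≤ 4 * η * ‖T‖ ^ 2 := by
      have h1 := (abs_le.mp hcomp).2
      have hsum : ‖T x‖ + ‖T z‖ ≤ 2 * ‖T‖ := by linarith
      have hsq : (‖T x‖ + ‖T z‖) ^ 2 ≤ (2 * ‖T‖) ^ 2 := by
        apply pow_le_pow_left₀ (by positivity) hsum
      have := mul_le_mul_of_nonneg_left hsq hη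
      nlinarith
    -- expand ‖T y‖²
    have hTyx : T y = α • T x + ((‖w‖ : ℂ)) • T z := by
      rw [hy', map_add, map_smul, map_smul]
    have hTips : (⟪α • T x, ((‖w‖ : ℂ)) • T z⟫ : ℂ)
        = (starRingEnd ℂ) α * (‖w‖ : ℂ) * ⟪T x, T z⟫ := by
      rw [inner_smul_left, inner_smul_right]; ring
    have hcross : -(η * ‖T‖ ^ 2) ≤ Complex.re (⟪α • T x, ((‖w‖ : ℂ)) • T z⟫ : ℂ) := by
      rw [hTips]
      have hb : ‖(starRingEnd ℂ) α * (‖w‖ : ℂ) * ⟪T x, T z⟫‖ ≤ η * ‖T‖ ^ 2 := by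
        rw [norm_mul, norm_mul]
        have h1 : ‖(starRingEnd ℂ) α‖ = ‖α‖ := RCLike.norm_conj α
        have h2 : ‖((‖w‖ : ℝ) : ℂ)‖ = ‖w‖ := by
          rw [Complex.norm_real, Real.norm_eq_abs, abs_of_nonneg (norm_nonneg w)]
        have h3 := hT x z hxz
        rw [h1, h2]
        have h4 : ‖(⟪T x, T z⟫ : ℂ)‖ ≤ η * (‖T‖ * ‖T‖) := by
          refine h3.trans (mul_le_mul_of_nonneg_left ?_ hη)
          exact mul_le_mul hTx hTz (norm_nonneg _) hTnn
        have h5 : ‖α‖ * ‖w‖ ≤ 1 := by nlinarith [norm_nonneg α, norm_nonneg w]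
        calc ‖α‖ * ‖w‖ * ‖(⟪T x, T z⟫ : ℂ)‖ ≤ 1 * (η * (‖T‖ * ‖T‖)) := by
              apply mul_le_mul h5 h4 (norm_nonneg _) zero_le_one
          _ = η * ‖T‖ ^ 2 := by ring
      have h6 := Complex.abs_re_le_norm ((starRingEnd ℂ) α * (‖w‖ : ℂ) * ⟪T x, T z⟫)
      have := abs_le.mp (h6.trans hb)
      linarith [this.1]
    have hTy2 : ‖T y‖ ^ 2 = ‖α‖ ^ 2 * ‖T x‖ ^ 2 + ‖w‖ ^ 2 * ‖T z‖ ^ 2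
        + 2 * Complex.re (⟪α • T x, ((‖w‖ : ℂ)) • T z⟫ : ℂ) := by
      have hns := @norm_add_sq ℂ _ _ _ _ (α • T x) (((‖w‖ : ℝ) : ℂ) • T z)
      rw [← hTyx] at hns
      rw [hns]
      have e1 : ‖α • T x‖ = ‖α‖ * ‖T x‖ := norm_smul _ _
      have e2 : ‖((‖w‖ : ℝ) : ℂ) • T z‖ = ‖w‖ * ‖T z‖ := by
        rw [norm_smul, Complex.norm_real, Real.norm_eq_abs, abs_of_nonneg (norm_nonneg w)]
      rw [e1, e2]
      simp only [RCLike.re_to_complex]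
      ring
    -- assemble
    have hw2 : ‖w‖ ^ 2 ≤ 1 := by nlinarith [norm_nonneg w]
    have hTz2 : ‖w‖ ^ 2 * ‖T z‖ ^ 2 ≥ ‖w‖ ^ 2 * ‖T x‖ ^ 2 - 4 * η * ‖T‖ ^ 2 := by
      have ha := mul_le_mul_of_nonneg_left hcomp' (sq_nonneg ‖w‖)
      have hq : (0:ℝ) ≤ 4 * η * ‖T‖ ^ 2 := by positivity
      have hb := mul_le_mul_of_nonneg_right hw2 hq
      nlinarith
    nlinarith [hcross, hTy2, hTz2, hpyth, norm_nonneg (T x), sq_nonneg ‖α‖]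

lemma lemC (hdim : 2 ≤ Module.rank ℂ H) {T : H →L[ℂ] H} {η : ℝ}
    (hT : IsAOP T η) (hη : 0 ≤ η) {y : H} (hy : ‖y‖ = 1) :
    (1 - 6 * η) * ‖T‖ ^ 2 ≤ ‖T y‖ ^ 2 := by
  have hrhsnn : (0:ℝ) ≤ ‖T y‖ ^ 2 + 6 * η * ‖T‖ ^ 2 := by positivity
  have hb : ‖T‖ ≤ Real.sqrt (‖T y‖ ^ 2 + 6 * η * ‖T‖ ^ 2) := by
    refine T.opNorm_le_bound (Real.sqrt_nonneg _) fun x => ?_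
    by_cases hx0 : x = 0
    · simp [hx0]
    · have hxn : ‖x‖ ≠ 0 := norm_ne_zero_iff.mpr hx0
      set x' : H := (‖x‖⁻¹ : ℂ) • x with hx'
      have hx'n : ‖x'‖ = 1 := by rw [hx', norm_smul]; simp [inv_mul_cancel₀ hxn]
      have h1 : ‖T x'‖ ^ 2 ≤ ‖T y‖ ^ 2 + 6 * η * ‖T‖ ^ 2 := lemB hdim hT hη hx'n hy
      have h2 : ‖T x'‖ ≤ Real.sqrt (‖T y‖ ^ 2 + 6 * η * ‖T‖ ^ 2) := by
        have := Real.sqrt_le_sqrt h1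
        rwa [Real.sqrt_sq (norm_nonneg _)] at this
      have h3 : ‖T x‖ = ‖x‖ * ‖T x'‖ := by
        rw [hx', map_smul, norm_smul]
        simp only [norm_inv, Complex.norm_real, Real.norm_eq_abs,
          abs_of_nonneg (norm_nonneg x)]
        field_simp
      rw [h3, mul_comm]
      exact mul_le_mul_of_nonneg_right h2 (norm_nonneg x)
  have h4 : ‖T‖ ^ 2 ≤ ‖T y‖ ^ 2 + 6 * η * ‖T‖ ^ 2 := by
    have := Real.sqrt_le_sqrt (le_refl (‖T y‖ ^ 2 + 6 * η * ‖T‖ ^ 2))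
    nlinarith [Real.sq_sqrt hrhsnn, Real.sqrt_nonneg (‖T y‖ ^ 2 + 6 * η * ‖T‖ ^ 2),
      norm_nonneg T, hb]
  linarith
lemma key_lemma (hdim : 2 ≤ Module.rank ℂ H) (T : H →L[ℂ] H) (hT0 : T ≠ 0)
    {η : ℝ} (hη : 0 < η) (hη' : η ≤ 1 / 24) (hAOP : IsAOP T η)
    {lam : ℝ} (hl : lam ∈ Set.Icc (minMod T) ‖T‖) :
    distV ((lam : ℂ)⁻¹ • T) ≤ 8 * η := by
  have hTpos : (0:ℝ) < ‖T‖ := norm_pos_iff.mpr hT0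
  have h6η : (0:ℝ) < 1 - 6 * η := by linarith
  have hlow : ∀ y : H, ‖y‖ = 1 → (1 - 6 * η) * ‖T‖ ^ 2 ≤ ‖T y‖ ^ 2 :=
    fun y hy => lemC hdim hAOP hη.le hy
  obtain ⟨x₀, hx₀⟩ := exists_unit_vec hdim
  have hmlow : Real.sqrt (1 - 6 * η) * ‖T‖ ≤ minMod T := by
    refine le_csInf ⟨‖T x₀‖, ⟨x₀, hx₀, rfl⟩⟩ ?_
    rintro r ⟨x, hx, rfl⟩
    have h1 := hlow x hx
    have h2 : Real.sqrt ((1 - 6 * η) * ‖T‖ ^ 2) ≤ Real.sqrt (‖T x‖ ^ 2) :=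
      Real.sqrt_le_sqrt h1
    rwa [Real.sqrt_mul h6η.le, Real.sqrt_sq hTpos.le, Real.sqrt_sq (norm_nonneg _)] at h2
  have hsqrtpos : (0:ℝ) < Real.sqrt (1 - 6 * η) := Real.sqrt_pos.mpr h6η
  have hlam0 : 0 < lam := lt_of_lt_of_le (by positivity) (hmlow.trans hl.1)
  have hlamsq : (1 - 6 * η) * ‖T‖ ^ 2 ≤ lam ^ 2 := by
    have h3 := hmlow.trans hl.1
    have h4 : (Real.sqrt (1 - 6 * η) * ‖T‖) ^ 2 ≤ lam ^ 2 :=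
      pow_le_pow_left₀ (by positivity) h3 2
    rw [mul_pow, Real.sq_sqrt h6η.le] at h4
    exact h4
  have hlamle : lam ^ 2 ≤ ‖T‖ ^ 2 := by nlinarith [hl.2]
  set A : H →L[ℂ] H := (lam : ℂ)⁻¹ • T with hA
  have hAapply : ∀ x : H, A x = (lam : ℂ)⁻¹ • T x := fun x => rfl
  have hAnx : ∀ x : H, ‖A x‖ = lam⁻¹ * ‖T x‖ := by
    intro x
    rw [hAapply, norm_smul]
    rw [show ‖((lam : ℝ) : ℂ)⁻¹‖ = lam⁻¹ by
      rw [norm_inv, Complex.norm_real, Real.norm_eq_abs, abs_of_pos hlam0]]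
  have hAnorm : ∀ x : H, ‖x‖ = 1 → |‖A x‖ ^ 2 - 1| ≤ 8 * η := by
    intro x hx
    have hTx2 : ‖T x‖ ^ 2 ≤ ‖T‖ ^ 2 := by
      have := T.le_opNorm x
      rw [hx, mul_one] at this
      nlinarith [norm_nonneg (T x)]
    have hAx2 : ‖A x‖ ^ 2 = ‖T x‖ ^ 2 / lam ^ 2 := by
      rw [hAnx]; field_simp
    have hup : ‖A x‖ ^ 2 ≤ 1 / (1 - 6 * η) := by
      rw [hAx2, div_le_div_iff₀ (by positivity) h6η]
      nlinarith [hlamsq]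
    have hdown : 1 - 6 * η ≤ ‖A x‖ ^ 2 := by
      rw [hAx2, le_div_iff₀ (by positivity)]
      nlinarith [hlow x hx, hlamle]
    rw [abs_le]
    refine ⟨by linarith, ?_⟩
    have h5 : 1 / (1 - 6 * η) - 1 ≤ 8 * η := by
      rw [div_sub' (ne_of_gt h6η), div_le_iff₀ h6η]
      nlinarith
    linarith
  set P : H →L[ℂ] H := star A * A with hP
  set S : H →L[ℂ] H := P - 1 with hS
  have hSsa : IsSelfAdjoint S := by
    rw [hS, hP]
    exact (IsSelfAdjoint.star_mul_self A).sub (IsSelfAdjoint.one _)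
  have hinnerS : ∀ x : H, (⟪S x, x⟫ : ℂ) = ((‖A x‖ ^ 2 - ‖x‖ ^ 2 : ℝ) : ℂ) := by
    intro x
    have e1 : S x = (star A) (A x) - x := rfl
    rw [e1, inner_sub_left, ContinuousLinearMap.star_eq_adjoint,
      ContinuousLinearMap.adjoint_inner_left, inner_self_eq_norm_sq_to_K,
      inner_self_eq_norm_sq_to_K]
    norm_cast
  have hdiag : ∀ x : H, ‖(⟪S x, x⟫ : ℂ)‖ ≤ (8 * η) * ‖x‖ ^ 2 := by
    intro x
    by_cases hx0 : x = 0
    · simp [hx0]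
    · have hxn : ‖x‖ ≠ 0 := norm_ne_zero_iff.mpr hx0
      set x' : H := (‖x‖⁻¹ : ℂ) • x with hx'
      have hx'n : ‖x'‖ = 1 := by rw [hx', norm_smul]; simp [inv_mul_cancel₀ hxn]
      have hAxx : ‖A x‖ = ‖x‖ * ‖A x'‖ := by
        rw [hx', map_smul, norm_smul]
        simp only [norm_inv, Complex.norm_real, Real.norm_eq_abs,
          abs_of_nonneg (norm_nonneg x)]
        field_simp
      rw [hinnerS, Complex.norm_real, Real.norm_eq_abs, hAxx]
      have h1 := hAnorm x' hx'n
      have h2 : (‖x‖ * ‖A x'‖) ^ 2 - ‖x‖ ^ 2 = ‖x‖ ^ 2 * (‖A x'‖ ^ 2 - 1) := by ring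
      rw [h2, abs_mul, abs_of_nonneg (sq_nonneg ‖x‖)]
      calc ‖x‖ ^ 2 * |‖A x'‖ ^ 2 - 1| ≤ ‖x‖ ^ 2 * (8 * η) :=
            mul_le_mul_of_nonneg_left h1 (sq_nonneg _)
        _ = 8 * η * ‖x‖ ^ 2 := by ring
  have hSnorm : ‖S‖ ≤ 8 * η := numrad hSsa (by positivity) hdiag
  have hPunit : IsUnit P := by
    have h1 : ‖(1 : H →L[ℂ] H) - P‖ < 1 := by
      have e : (1 : H →L[ℂ] H) - P = -S := by rw [hS]; abel
      rw [e, norm_neg]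
      linarith
    have h2 := (Units.oneSub ((1 : H →L[ℂ] H) - P) h1).isUnit
    simpa using h2
  set u := hPunit.unit with huu
  have hu : (u : H →L[ℂ] H) = P := hPunit.unit_spec
  have hPpos : (0 : H →L[ℂ] H) ≤ P := star_mul_self_nonneg A
  set B : H →L[ℂ] H := CFC.sqrt P with hB
  have hB2 : B * B = P := by
    have := CFC.sq_sqrt P hPpos
    rwa [sq] at this
  have hBpos : (0 : H →L[ℂ] H) ≤ B := CFC.sqrt_nonneg P
  have hcomm : Commute B P := by
    rw [← hB2]
    exact (Commute.refl B).mul_right (Commute.refl B)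
  have hcu : Commute B (↑u⁻¹ : H →L[ℂ] H) := by
    have h1 : Commute B (↑u : H →L[ℂ] H) := by rwa [hu]
    exact h1.units_inv_right
  set Cc : H →L[ℂ] H := B * ↑u⁻¹ with hCc
  have hBCc : B * Cc = 1 := by
    rw [hCc, ← mul_assoc, hB2, ← hu, u.mul_inv]
  have hCcB : Cc * B = 1 := by
    rw [hCc, mul_assoc, ← hcu.eq, ← mul_assoc, hB2, ← hu, u.mul_inv]
  set V : H →L[ℂ] H := A * Cc with hV
  have hVB : V * B = A := by rw [hV, mul_assoc, hCcB, mul_one]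
  have hPsa : IsSelfAdjoint P := IsSelfAdjoint.star_mul_self A
  have hBsa : IsSelfAdjoint B := IsSelfAdjoint.of_nonneg hBpos
  have huinvsa : star ((↑u⁻¹ : H →L[ℂ] H)) = ↑u⁻¹ := by
    have h1 : (↑u⁻¹ : H →L[ℂ] H) * P = 1 := by rw [← hu, u.inv_mul]
    have h3 : P * star (↑u⁻¹ : H →L[ℂ] H) = 1 := by
      have h4 := congrArg star h1
      rwa [star_mul, star_one, hPsa.star_eq] at h4
    calc star ((↑u⁻¹ : H →L[ℂ] H)) = 1 * star ↑u⁻¹ := (one_mul _).symm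
      _ = (↑u⁻¹ * P) * star ↑u⁻¹ := by rw [h1]
      _ = ↑u⁻¹ * (P * star ↑u⁻¹) := mul_assoc _ _ _
      _ = ↑u⁻¹ := by rw [h3, mul_one]
  have hCcsa : star Cc = Cc := by
    rw [hCc, star_mul, huinvsa, hBsa.star_eq, ← hcu.eq]
  have hCcP : Cc * P = B := by
    rw [hCc, mul_assoc, ← hu, u.inv_mul, mul_one]
  have hstarVV : star V * V = 1 := by
    have e1 : star V * V = Cc * P * Cc := by
      rw [hV, star_mul, hCcsa, hP]
      simp only [mul_assoc]
    rw [e1, hCcP, hBCc]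
  have hViso : ∀ x : H, ‖V x‖ = ‖x‖ := by
    intro x
    have h1 : (⟪V x, V x⟫ : ℂ) = ⟪x, x⟫ := by
      have e1 := ContinuousLinearMap.adjoint_inner_left V x (V x)
      rw [← ContinuousLinearMap.star_eq_adjoint] at e1
      rw [← e1, show (star V) (V x) = (star V * V) x from rfl, hstarVV,
        ContinuousLinearMap.one_apply]
    have h2 : ‖V x‖ ^ 2 = ‖x‖ ^ 2 := by
      have h3 := congrArg Complex.re h1
      rwa [show (⟪V x, V x⟫ : ℂ).re = ‖V x‖ ^ 2 from by
          simpa using inner_self_eq_norm_sq (𝕜 := ℂ) (V x),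
        show (⟪x, x⟫ : ℂ).re = ‖x‖ ^ 2 from by
          simpa using inner_self_eq_norm_sq (𝕜 := ℂ) x] at h3
    have h4 := congrArg Real.sqrt h2
    rwa [Real.sqrt_sq (norm_nonneg _), Real.sqrt_sq (norm_nonneg _)] at h4
  have hkey : ∀ x : H, ‖(B - 1) x‖ ≤ ‖S x‖ := by
    intro x
    have hfact : (B + 1) * (B - 1) = S := by
      rw [hS, ← hB2]; noncomm_ring
    have hyS : S x = (B + 1) ((B - 1) x) := by
      rw [← hfact]; rfl
    set y : H := (B - 1) x with hy
    have hBy : 0 ≤ (⟪B y, y⟫ : ℂ).re := by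
      have h5 := ((ContinuousLinearMap.nonneg_iff_isPositive B).mp hBpos).inner_nonneg_left y
      exact (Complex.nonneg_iff.mp (by simpa [ContinuousLinearMap.reApplyInnerSelf] using h5)).1
    have hip : ‖y‖ ^ 2 ≤ (⟪(B + 1) y, y⟫ : ℂ).re := by
      have e1 : (B + 1) y = B y + y := rfl
      rw [e1, inner_add_left, Complex.add_re,
        show (⟪y, y⟫ : ℂ).re = ‖y‖ ^ 2 from by
          simpa using inner_self_eq_norm_sq (𝕜 := ℂ) y]
      linarith
    have hcs : (⟪(B + 1) y, y⟫ : ℂ).re ≤ ‖(B + 1) y‖ * ‖y‖ := by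
      have h1 := Complex.re_le_norm (⟪(B + 1) y, y⟫ : ℂ)
      exact h1.trans (norm_inner_le_norm _ _)
    have hfin : ‖y‖ ≤ ‖(B + 1) y‖ := by
      rcases eq_or_lt_of_le (norm_nonneg y) with h0 | h0
      · rw [← h0]; exact norm_nonneg _
      · have := hip.trans hcs
        nlinarith
    rw [hyS]
    exact hfin
  have hAV : ‖A - V‖ ≤ 8 * η := by
    have hAVfact : A - V = V * (B - 1) := by rw [mul_sub, mul_one, hVB]
    refine ContinuousLinearMap.opNorm_le_bound _ (by positivity) fun x => ?_
    have e1 : (A - V) x = V ((B - 1) x) := by rw [hAVfact]; rfl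
    rw [e1, hViso]
    calc ‖(B - 1) x‖ ≤ ‖S x‖ := hkey x
      _ ≤ ‖S‖ * ‖x‖ := S.le_opNorm x
      _ ≤ 8 * η * ‖x‖ := mul_le_mul_of_nonneg_right hSnorm (norm_nonneg x)
  have hVmem : V ∈ isoms H := hViso
  calc distV A ≤ dist A V := Metric.infDist_le_dist_of_mem hVmem
    _ = ‖A - V‖ := dist_eq_norm A V
    _ ≤ 8 * η := hAV

/-- If `ε̂(Tₙ) → 0` for nonzero `Tₙ` and `λₙ ∈ [m(Tₙ), ‖Tₙ‖]`, then `dist(Tₙ/λₙ, 𝒱) → 0`. -/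
theorem distV_tendsto_zero' (hdim : 2 ≤ Module.rank ℂ H)
    (Tn : ℕ → H →L[ℂ] H) (hTn : ∀ n, Tn n ≠ 0)
    (heps : Filter.Tendsto (fun n => epsHat (Tn n)) Filter.atTop (nhds 0))
    (lam : ℕ → ℝ) (hlam : ∀ n, lam n ∈ Set.Icc (minMod (Tn n)) ‖Tn n‖) :
    Filter.Tendsto (fun n => distV (((lam n : ℂ))⁻¹ • Tn n)) Filter.atTop (nhds 0) := by
  rw [Metric.tendsto_atTop] at heps ⊢
  intro ε hε
  set η : ℝ := min (ε / 9) (1 / 24) with hηdef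
  have hη0 : 0 < η := lt_min (by linarith) (by norm_num)
  obtain ⟨N, hN⟩ := heps η hη0
  refine ⟨N, fun n hn => ?_⟩
  have h1 : epsHat (Tn n) < η := by
    have h2 := hN n hn
    rw [Real.dist_eq, sub_zero] at h2
    exact (le_abs_self _).trans_lt h2
  have hsetne : ({ε' : ℝ | 0 ≤ ε' ∧ ε' ≤ 1 ∧ IsAOP (Tn n) ε'}).Nonempty :=
    ⟨1, ⟨zero_le_one, le_refl 1, isAOP_one _⟩⟩
  have h2 : ∃ a ∈ {ε' : ℝ | 0 ≤ ε' ∧ ε' ≤ 1 ∧ IsAOP (Tn n) ε'}, a < η := by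
    rw [epsHat] at h1
    exact exists_lt_of_csInf_lt hsetne h1
  obtain ⟨a, ⟨ha0, ha1, haop⟩, haη⟩ := h2
  have haopη : IsAOP (Tn n) η := haop.mono haη.le
  have hk := key_lemma hdim (Tn n) (hTn n) hη0 (min_le_right _ _) haopη (hlam n)
  rw [Real.dist_eq, sub_zero, abs_of_nonneg (by
    unfold distV; exact Metric.infDist_nonneg : (0:ℝ) ≤ distV (((lam n : ℂ))⁻¹ • Tn n))]
  have h3 : 8 * η ≤ 8 * (ε / 9) :=
    mul_le_mul_of_nonneg_left (min_le_left _ _) (by norm_num)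
  calc distV (((lam n : ℂ))⁻¹ • Tn n) ≤ 8 * η := hk
    _ < ε := by linarith
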